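/- arXiv:1811.06897 — 2 statements merged into one kernel-verified Lean document; each statement's English description precedes it below -/
import Mathlib

section
/- Let G = (A ∪ B, E) be a marriage instance and M a popular matching of G admitting a witness β ∈ {0, ±1}^(A ∪ B) such that β_u = 0 for every vertex u unmatched in M and β_u ∈ {+1, −1} for every vertex u matched in M. Then G_M contains no M-augmenting path; hence M is a dominant matching of G. -/
open scoped Classical

namespace PopMatch

/-- A marriage/roommates instance: a vertex set with a bipartition `A`/`B`
(ignored for roommates instances) and, for each vertex, a strict preference
list over its neighbors (most preferred first).  Adjacency is given by mutual
membership in the preference lists. -/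
structure Inst (V : Type*) where
  A : Finset V
  B : Finset V
  plist : V → List V

namespace Inst

variable {V : Type*} [DecidableEq V] [Fintype V]

/-- `u` and `v` are adjacent. -/
def adj (I : Inst V) (u v : V) : Prop := v ∈ I.plist u ∧ u ∈ I.plist v

/-- `u` (strictly) prefers `v` to `w`. -/
def pref (I : Inst V) (u v w : V) : Prop :=
  v ∈ I.plist u ∧ w ∈ I.plist u ∧ (I.plist u).idxOf v < (I.plist u).idxOf w

/-- Well-formedness of an instance as a marriage instance: preference lists are
duplicate-free and symmetric, and the graph is bipartite with parts `A`, `B`. -/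
def IsValid (I : Inst V) : Prop :=
  (∀ v, (I.plist v).Nodup) ∧
  (∀ u v, v ∈ I.plist u ↔ u ∈ I.plist v) ∧
  Disjoint I.A I.B ∧
  (∀ v : V, v ∈ I.A ∨ v ∈ I.B) ∧
  (∀ u v, v ∈ I.plist u → ((u ∈ I.A ∧ v ∈ I.B) ∨ (u ∈ I.B ∧ v ∈ I.A)))

/-- A matching, encoded by its partner function. -/
def IsMatching (I : Inst V) (p : V → Option V) : Prop :=
  (∀ u v, p u = some v → p v = some u) ∧ (∀ u v, p u = some v → I.adj u v)

/-- The number of matched vertices (twice the number of edges of the matching). -/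
def msize (p : V → Option V) : ℕ := (Finset.univ.filter fun u => (p u).isSome).card

/-- Vertex `u` prefers matching `p` to matching `q`. -/
def PrefM (I : Inst V) (p q : V → Option V) (u : V) : Prop :=
  match p u, q u with
  | some _, none => True
  | some v, some w => I.pref u v w
  | none, _ => False

/-- `phi p q` = number of vertices preferring `p` to `q`. -/
noncomputable def phi (I : Inst V) (p q : V → Option V) : ℕ :=
  (Finset.univ.filter fun u => I.PrefM p q u).card

/-- `delta p q = phi p q - phi q p`. -/
noncomputable def delta (I : Inst V) (p q : V → Option V) : ℤ :=
  (I.phi p q : ℤ) - (I.phi q p : ℤ)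

/-- A popular matching: it never loses a head-to-head election. -/
def Popular (I : Inst V) (p : V → Option V) : Prop :=
  I.IsMatching p ∧ ∀ q, I.IsMatching q → 0 ≤ I.delta p q

/-- A dominant matching: a popular matching that beats every larger matching. -/
def Dominant (I : Inst V) (p : V → Option V) : Prop :=
  I.Popular p ∧ ∀ q, I.IsMatching q → msize p < msize q → 0 < I.delta p q

/-- A maximum-size popular matching. -/
def MaxPopular (I : Inst V) (p : V → Option V) : Prop :=
  I.Popular p ∧ ∀ q, I.Popular q → msize q ≤ msize p

/-- A minimum-size popular matching. -/
def MinPopular (I : Inst V) (p : V → Option V) : Prop :=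
  I.Popular p ∧ ∀ q, I.Popular q → msize p ≤ msize q

/-- `u` prefers `v` to its situation in the matching `p`
(an unmatched vertex prefers any neighbor to being unmatched). -/
def PrefOver (I : Inst V) (p : V → Option V) (u v : V) : Prop :=
  match p u with
  | none => True
  | some w => I.pref u v w

/-- The edge `(u,v)` blocks the matching `p`. -/
def Blocks (I : Inst V) (p : V → Option V) (u v : V) : Prop :=
  I.adj u v ∧ p u ≠ some v ∧ I.PrefOver p u v ∧ I.PrefOver p v u

/-- A stable matching: a matching with no blocking edge. -/
def Stable (I : Inst V) (p : V → Option V) : Prop :=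
  I.IsMatching p ∧ ∀ u v, ¬ I.Blocks p u v

/-- Adjacency in the subgraph `G_M` obtained by deleting the edges
labeled `(-,-)` with respect to the matching `p`. -/
def GMAdj (I : Inst V) (p : V → Option V) (u v : V) : Prop :=
  I.adj u v ∧ (p u = some v ∨ I.PrefOver p u v ∨ I.PrefOver p v u)

/-- `f 0, f 1, …, f n` is an augmenting path with respect to the matching `p`
inside the subgraph `G_M`: an odd number `n` of edges, alternately outside and
inside `p`, with both endpoints unmatched. -/
def IsAugPath (I : Inst V) (p : V → Option V) (n : ℕ) (f : ℕ → V) : Prop :=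
  n % 2 = 1 ∧
  (∀ i j, i ≤ n → j ≤ n → f i = f j → i = j) ∧
  (∀ i, i < n → I.GMAdj p (f i) (f (i + 1))) ∧
  (∀ i, i < n → (p (f i) = some (f (i + 1)) ↔ i % 2 = 1)) ∧
  p (f 0) = none ∧ p (f n) = none

/-- `G_M` contains an augmenting path with respect to `p`. -/
def HasAugPath (I : Inst V) (p : V → Option V) : Prop := ∃ n f, I.IsAugPath p n f

/-- `u` prefers its situation in the matching `p` to `v`. -/
def PrefSit (I : Inst V) (p : V → Option V) (u v : V) : Prop :=
  match p u with
  | none => False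
  | some w => I.pref u w v

/-- The weight `wt_p(u,v)` of an edge: `2` for a blocking edge, `-2` for a
`(-,-)` edge, `0` otherwise. -/
noncomputable def wtE (I : Inst V) (p : V → Option V) (u v : V) : ℤ :=
  if I.PrefOver p u v ∧ I.PrefOver p v u then 2
  else if I.PrefSit p u v ∧ I.PrefSit p v u then -2 else 0

/-- The weight `wt_p(u,u)` of a self-loop. -/
def wtSelf (p : V → Option V) (u : V) : ℤ := if p u = none then 0 else -1

/-- A witness (dual certificate) for the popularity of the matching `p`. -/
def IsWitness (I : Inst V) (p : V → Option V) (α : V → ℤ) : Prop :=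
  (∀ u, α u = 0 ∨ α u = 1 ∨ α u = -1) ∧
  (∑ u : V, α u) = 0 ∧
  (∀ u v, I.adj u v → I.wtE p u v ≤ α u + α v) ∧
  (∀ u : V, wtSelf p u ≤ α u)

end Inst

end PopMatch

set_option linter.unusedSectionVars false

namespace PopMatch

namespace Inst

variable {V : Type*} [DecidableEq V] [Fintype V]

lemma pref_asymm (I : Inst V) {u v w : V} (h : I.pref u v w) : ¬ I.pref u w v := by
  rintro ⟨_, _, h2⟩
  exact absurd h.2.2 (by omega)

lemma pref_total (I : Inst V) {u v w : V} (hv : v ∈ I.plist u) (hw : w ∈ I.plist u) :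
    v = w ∨ I.pref u v w ∨ I.pref u w v := by
  rcases Nat.lt_trichotomy ((I.plist u).idxOf v) ((I.plist u).idxOf w) with h | h | h
  · exact Or.inr (Or.inl ⟨hv, hw, h⟩)
  · exact Or.inl ((List.idxOf_inj hv).1 h)
  · exact Or.inr (Or.inr ⟨hw, hv, h⟩)

lemma pref_irrefl (I : Inst V) (u v : V) : ¬ I.pref u v v := by
  rintro ⟨_, _, h⟩; omega

lemma prefOver_none (I : Inst V) {p : V → Option V} {u : V} (h : p u = none) (v : V) :
    I.PrefOver p u v := by
  simp [PrefOver, h]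

lemma prefOver_some (I : Inst V) {p : V → Option V} {u w : V} (h : p u = some w) (v : V) :
    I.PrefOver p u v ↔ I.pref u v w := by
  simp [PrefOver, h]

lemma prefSit_none (I : Inst V) {p : V → Option V} {u : V} (h : p u = none) (v : V) :
    ¬ I.PrefSit p u v := by
  simp [PrefSit, h]

lemma prefSit_some (I : Inst V) {p : V → Option V} {u w : V} (h : p u = some w) (v : V) :
    I.PrefSit p u v ↔ I.pref u w v := by
  simp [PrefSit, h]

lemma over_not_sit (I : Inst V) {p : V → Option V} {u v : V} (h : I.PrefOver p u v) :
    ¬ I.PrefSit p u v := by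
  cases hpu : p u with
  | none => exact I.prefSit_none hpu v
  | some w =>
      rw [I.prefOver_some hpu] at h
      rw [I.prefSit_some hpu]
      exact I.pref_asymm h

lemma wtE_matched (I : Inst V) {p : V → Option V} {u v : V} (hm : I.IsMatching p)
    (h : p u = some v) : I.wtE p u v = 0 := by
  have h1 : ¬ I.PrefOver p u v := by
    rw [I.prefOver_some h]; exact I.pref_irrefl u v
  have h2 : ¬ I.PrefSit p u v := by
    rw [I.prefSit_some h]; exact I.pref_irrefl u v
  unfold wtE
  rw [if_neg (fun hh => h1 hh.1), if_neg (fun hh => h2 hh.1)]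

lemma sit_not_over (I : Inst V) {p : V → Option V} {u v : V} (h : I.PrefSit p u v) :
    ¬ I.PrefOver p u v := fun h' => I.over_not_sit h' h

lemma wtE_comm (I : Inst V) (p : V → Option V) (u v : V) : I.wtE p u v = I.wtE p v u := by
  unfold wtE
  by_cases h1 : I.PrefOver p u v <;> by_cases h2 : I.PrefOver p v u <;>
    by_cases h3 : I.PrefSit p u v <;> by_cases h4 : I.PrefSit p v u <;>
    simp [h1, h2, h3, h4]

lemma wtE_nonneg_of_GM (I : Inst V) {p : V → Option V} {u v : V} (h : I.GMAdj p u v) :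
    0 ≤ I.wtE p u v := by
  unfold wtE
  split_ifs with h1 h2
  · norm_num
  · exfalso
    rcases h.2 with hm | ho | ho
    · exact absurd ((I.prefSit_some hm v).1 h2.1) (I.pref_irrefl u v)
    · exact I.over_not_sit ho h2.1
    · exact I.over_not_sit ho h2.2
  · norm_num

lemma sum_comp_invol (s : Finset V) (σ : V → V) (h1 : ∀ u ∈ s, σ u ∈ s)
    (h2 : ∀ u ∈ s, σ (σ u) = u) (g : V → ℤ) : ∑ u ∈ s, g (σ u) = ∑ u ∈ s, g u :=
  Finset.sum_nbij' σ σ h1 h1 h2 h2 (fun _ _ => rfl)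

/-- On every edge of the matching, the witness values sum to zero. -/
lemma medge_beta (I : Inst V) {p : V → Option V} {β : V → ℤ} (hm : I.IsMatching p)
    (hwit : I.IsWitness p β) (h0 : ∀ u, p u = none → β u = 0) :
    ∀ u v, p u = some v → β u + β v = 0 := by
  classical
  set s : Finset V := Finset.univ.filter (fun u => (p u).isSome) with hs
  set σ : V → V := fun u => (p u).getD u with hσdef
  have hσ : ∀ u v, p u = some v → σ u = v := by
    intro u v h; simp [hσdef, h]
  have hmem : ∀ u, u ∈ s ↔ (p u).isSome := by
    intro u; simp [hs]
  have hmem' : ∀ u v, p u = some v → u ∈ s := by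
    intro u v h; rw [hmem, h]; rfl
  have h1s : ∀ u ∈ s, σ u ∈ s := by
    intro u hu
    obtain ⟨v, hv⟩ := Option.isSome_iff_exists.1 ((hmem u).1 hu)
    rw [hσ u v hv]
    exact hmem' v u (hm.1 u v hv)
  have h2s : ∀ u ∈ s, σ (σ u) = u := by
    intro u hu
    obtain ⟨v, hv⟩ := Option.isSome_iff_exists.1 ((hmem u).1 hu)
    rw [hσ u v hv, hσ v u (hm.1 u v hv)]
  have hsumβ : ∑ u ∈ s, β u = 0 := by
    have hsplit := Finset.sum_filter_add_sum_filter_not Finset.univ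
      (fun u => (p u).isSome) β
    have hz : ∑ u ∈ Finset.univ.filter (fun u => ¬ (p u).isSome), β u = 0 := by
      apply Finset.sum_eq_zero
      intro u hu
      simp only [Finset.mem_filter, Option.not_isSome_iff_eq_none] at hu
      exact h0 u hu.2
    rw [hz] at hsplit
    rw [hs]
    rw [hwit.2.1] at hsplit
    linarith
  have hterm0 : ∀ u ∈ s, 0 ≤ β u + β (σ u) := by
    intro u hu
    obtain ⟨v, hv⟩ := Option.isSome_iff_exists.1 ((hmem u).1 hu)
    rw [hσ u v hv]
    have := hwit.2.2.1 u v (hm.2 u v hv)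
    rw [I.wtE_matched hm hv] at this
    exact this
  have hsum : ∑ u ∈ s, (β u + β (σ u)) = 0 := by
    rw [Finset.sum_add_distrib, sum_comp_invol s σ h1s h2s β, hsumβ]
    norm_num
  intro u v huv
  have := (Finset.sum_eq_zero_iff_of_nonneg hterm0).1 hsum u (hmem' u v huv)
  rwa [hσ u v huv] at this

lemma vote_unmatched (I : Inst V) {p q : V → Option V} {u : V} (h : q u = none) :
    (if I.PrefM q p u then (1 : ℤ) else 0) - (if I.PrefM p q u then (1 : ℤ) else 0)
      = wtSelf p u := by
  cases hpu : p u with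
  | none => simp [PrefM, h, hpu, wtSelf]
  | some w => simp [PrefM, h, hpu, wtSelf]

lemma vote_pair (I : Inst V) {p q : V → Option V} (hp : I.IsMatching p) (hq : I.IsMatching q)
    {u v : V} (h : q u = some v) :
    ((if I.PrefM q p u then (1 : ℤ) else 0) - (if I.PrefM p q u then (1 : ℤ) else 0))
      + ((if I.PrefM q p v then (1 : ℤ) else 0) - (if I.PrefM p q v then (1 : ℤ) else 0))
      = I.wtE p u v := by
  have hvu : q v = some u := hq.1 u v h
  have hadjuv : I.adj u v := hq.2 u v h
  have e1 : I.PrefM q p u ↔ I.PrefOver p u v := by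
    cases hpu : p u with
    | none => simp [PrefM, PrefOver, h, hpu]
    | some w => simp [PrefM, PrefOver, h, hpu]
  have e2 : I.PrefM p q u ↔ I.PrefSit p u v := by
    cases hpu : p u with
    | none => simp [PrefM, PrefSit, h, hpu]
    | some w => simp [PrefM, PrefSit, h, hpu]
  have e3 : I.PrefM q p v ↔ I.PrefOver p v u := by
    cases hpv : p v with
    | none => simp [PrefM, PrefOver, hvu, hpv]
    | some w => simp [PrefM, PrefOver, hvu, hpv]
  have e4 : I.PrefM p q v ↔ I.PrefSit p v u := by
    cases hpv : p v with
    | none => simp [PrefM, PrefSit, hvu, hpv]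
    | some w => simp [PrefM, PrefSit, hvu, hpv]
  rw [if_congr e1 rfl rfl, if_congr e2 rfl rfl, if_congr e3 rfl rfl, if_congr e4 rfl rfl]
  by_cases hm : p u = some v
  · have hmv : p v = some u := hp.1 u v hm
    have o1 : ¬ I.PrefOver p u v := by rw [I.prefOver_some hm]; exact I.pref_irrefl u v
    have o2 : ¬ I.PrefOver p v u := by rw [I.prefOver_some hmv]; exact I.pref_irrefl v u
    have s1 : ¬ I.PrefSit p u v := by rw [I.prefSit_some hm]; exact I.pref_irrefl u v
    have s2 : ¬ I.PrefSit p v u := by rw [I.prefSit_some hmv]; exact I.pref_irrefl v u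
    rw [I.wtE_matched hp hm]
    simp [o1, o2, s1, s2]
  · have hmv : p v ≠ some u := fun hh => hm (hp.1 v u hh)
    have hu : I.PrefOver p u v ∨ I.PrefSit p u v := by
      cases hpu : p u with
      | none => exact Or.inl (I.prefOver_none hpu v)
      | some w =>
          have hw : w ∈ I.plist u := (hp.2 u w hpu).1
          have hv' : v ∈ I.plist u := hadjuv.1
          rcases I.pref_total hv' hw with he | hpr | hpr
          · exact absurd (he ▸ hpu) hm
          · exact Or.inl ((I.prefOver_some hpu v).2 hpr)
          · exact Or.inr ((I.prefSit_some hpu v).2 hpr)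
    have hv2 : I.PrefOver p v u ∨ I.PrefSit p v u := by
      cases hpv : p v with
      | none => exact Or.inl (I.prefOver_none hpv u)
      | some w =>
          have hw : w ∈ I.plist v := (hp.2 v w hpv).1
          have hu' : u ∈ I.plist v := hadjuv.2
          rcases I.pref_total hu' hw with he | hpr | hpr
          · exact absurd (he ▸ hpv) hmv
          · exact Or.inl ((I.prefOver_some hpv u).2 hpr)
          · exact Or.inr ((I.prefSit_some hpv u).2 hpr)
    rcases hu with hu | hu <;> rcases hv2 with hv2 | hv2
    · have n1 : ¬ I.PrefSit p u v := I.over_not_sit hu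
      have n2 : ¬ I.PrefSit p v u := I.over_not_sit hv2
      simp [wtE, hu, hv2, n1, n2]
    · have n1 : ¬ I.PrefSit p u v := I.over_not_sit hu
      have n2 : ¬ I.PrefOver p v u := I.sit_not_over hv2
      simp [wtE, hu, hv2, n1, n2]
    · have n1 : ¬ I.PrefOver p u v := I.sit_not_over hu
      have n2 : ¬ I.PrefSit p v u := I.over_not_sit hv2
      simp [wtE, hu, hv2, n1, n2]
    · have n1 : ¬ I.PrefOver p u v := I.sit_not_over hu
      have n2 : ¬ I.PrefOver p v u := I.sit_not_over hv2
      simp [wtE, hu, hv2, n1, n2]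

lemma delta_eq_sum (I : Inst V) (p q : V → Option V) :
    I.delta q p = ∑ u : V, ((if I.PrefM q p u then (1 : ℤ) else 0)
      - (if I.PrefM p q u then (1 : ℤ) else 0)) := by
  unfold delta phi
  rw [Finset.card_filter, Finset.card_filter]
  push_cast
  rw [Finset.sum_sub_distrib]

end Inst

end PopMatch


namespace PopMatch

/-- A popular matching with a witness `β ∈ {0,±1}^V` that is
`0` exactly on unmatched vertices and `±1` on matched vertices admits no
augmenting path in `G_M`; hence it is dominant. -/
theorem witness_pm_one_implies_dominant
    {V : Type*} [DecidableEq V] [Fintype V] (I : Inst V) (hI : I.IsValid)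
    (p : V → Option V) (β : V → ℤ)
    (hpop : I.Popular p) (hwit : I.IsWitness p β)
    (h0 : ∀ u, p u = none → β u = 0)
    (h1 : ∀ u, p u ≠ none → β u = 1 ∨ β u = -1) :
    ¬ I.HasAugPath p ∧ I.Dominant p := by
  obtain ⟨hm, hpp⟩ := hpop
  have hmedge := I.medge_beta hm hwit h0
  have hnoaug : ¬ I.HasAugPath p := by
    rintro ⟨n, f, hodd, hinj, hadjP, halt, hA, hB⟩
    have heven : ∀ i, i < n → 0 ≤ β (f i) + β (f (i + 1)) := by
      intro i hi
      have hg := hadjP i hi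
      exact le_trans (I.wtE_nonneg_of_GM hg) (hwit.2.2.1 _ _ hg.1)
    have hoddE : ∀ i, i < n → i % 2 = 1 → β (f i) + β (f (i + 1)) = 0 := by
      intro i hi ho
      exact hmedge _ _ ((halt i hi).2 ho)
    have hval : ∀ i, i < n → β (f i) = if i = 0 then 0 else if i % 2 = 1 then 1 else -1 := by
      intro i
      induction i with
      | zero => intro _; simp [h0 _ hA]
      | succ k ih =>
        intro hi
        have hk : k < n := Nat.lt_of_succ_lt hi
        have hvk := ih hk
        by_cases hko : k % 2 = 0
        · have hmk : p (f (k + 1)) ≠ none := by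
            rw [(halt (k + 1) hi).2 (show (k + 1) % 2 = 1 by omega)]
            simp
          have hβ1 := h1 _ hmk
          have hge := heven k hk
          have hβk : β (f k) = 0 ∨ β (f k) = -1 := by
            by_cases hk0 : k = 0
            · left; simpa [hk0] using hvk
            · right; simpa [hk0, show ¬ k % 2 = 1 by omega] using hvk
          have hone : β (f (k + 1)) = 1 := by
            rcases hβ1 with h' | h'
            · exact h'
            · exfalso; rcases hβk with h'' | h'' <;> linarith
          simp [hone, show (k + 1) % 2 = 1 by omega]
        · have h1k : β (f k) = 1 := by
            simpa [show ¬ k = 0 by omega, show k % 2 = 1 by omega] using hvk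
          have hz := hoddE k hk (by omega)
          have hmone : β (f (k + 1)) = -1 := by linarith
          simp [hmone, show ¬ (k + 1) % 2 = 1 by omega]
    by_cases hn1 : n = 1
    · subst hn1
      have hadj0 := (hadjP 0 (by omega)).1
      have hw := hwit.2.2.1 _ _ hadj0
      have h2 : I.wtE p (f 0) (f 1) = 2 := by
        unfold Inst.wtE
        rw [if_pos ⟨I.prefOver_none hA _, I.prefOver_none hB _⟩]
      rw [h2, h0 _ hA, h0 _ hB] at hw
      omega
    · have hlt : n - 1 < n := by omega
      have hge := heven (n - 1) hlt
      rw [show n - 1 + 1 = n by omega] at hge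
      have hv := hval (n - 1) hlt
      rw [if_neg (show ¬ n - 1 = 0 by omega), if_neg (show ¬ (n - 1) % 2 = 1 by omega)] at hv
      rw [hv, h0 _ hB] at hge
      omega
  refine ⟨hnoaug, ⟨hm, hpp⟩, ?_⟩
  intro q hq hsz
  have hex : ∃ a v, p a = none ∧ q a = some v := by
    by_contra hno
    push_neg at hno
    have hsub : (Finset.univ.filter fun u => (q u).isSome) ⊆
        (Finset.univ.filter fun u => (p u).isSome) := by
      intro u hu
      simp only [Finset.mem_filter, Finset.mem_univ, true_and] at hu ⊢
      rw [Option.isSome_iff_exists] at hu ⊢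
      obtain ⟨w, hw⟩ := hu
      rcases hpu : p u with _ | w'
      · exact absurd hw (hno u w hpu)
      · exact ⟨w', rfl⟩
    have hcard := Finset.card_le_card hsub
    unfold Inst.msize at hsz
    omega
  obtain ⟨a, v0, ha0, hav⟩ := hex
  set s : Finset V := Finset.univ.filter (fun u => (q u).isSome) with hs
  set σ : V → V := fun u => (q u).getD u with hσdef
  set F : V → ℤ := fun u => (if I.PrefM q p u then (1 : ℤ) else 0)
    - (if I.PrefM p q u then (1 : ℤ) else 0) with hF
  have hσ : ∀ u w, q u = some w → σ u = w := by intro u w h; simp [hσdef, h]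
  have hmem : ∀ u, u ∈ s ↔ (q u).isSome := by intro u; simp [hs]
  have hmem' : ∀ u w, q u = some w → u ∈ s := by intro u w h; rw [hmem, h]; rfl
  have h1s : ∀ u ∈ s, σ u ∈ s := by
    intro u hu
    obtain ⟨w, hw⟩ := Option.isSome_iff_exists.1 ((hmem u).1 hu)
    rw [hσ u w hw]
    exact hmem' w u (hq.1 u w hw)
  have h2s : ∀ u ∈ s, σ (σ u) = u := by
    intro u hu
    obtain ⟨w, hw⟩ := Option.isSome_iff_exists.1 ((hmem u).1 hu)
    rw [hσ u w hw, hσ w u (hq.1 u w hw)]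
  have hadjav : I.adj a v0 := hq.2 _ _ hav
  have hwav := hwit.2.2.1 _ _ hadjav
  have hba : β a = 0 := h0 _ ha0
  have hslack : I.wtE p a v0 ≤ β a + β v0 - 1 := by
    have hova : I.PrefOver p a v0 := I.prefOver_none ha0 _
    have hwt01 : I.wtE p a v0 = 0 ∨ I.wtE p a v0 = 2 := by
      have hns : ¬ (I.PrefSit p a v0 ∧ I.PrefSit p v0 a) := fun hh => I.prefSit_none ha0 v0 hh.1
      unfold Inst.wtE
      rw [if_neg hns]
      split_ifs <;> norm_num
    have hpv : p v0 ≠ none := by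
      intro hpn
      have h2 : I.wtE p a v0 = 2 := by
        unfold Inst.wtE
        rw [if_pos ⟨hova, I.prefOver_none hpn a⟩]
      rw [h2, hba, h0 _ hpn] at hwav
      omega
    rcases h1 _ hpv with h' | h' <;> rcases hwt01 with h'' | h'' <;> linarith
  have hgnn : ∀ u ∈ s, 0 ≤ β u + β (σ u) - I.wtE p u (σ u) := by
    intro u hu
    obtain ⟨w, hw⟩ := Option.isSome_iff_exists.1 ((hmem u).1 hu)
    rw [hσ u w hw]
    linarith [hwit.2.2.1 u w (hq.2 u w hw)]
  have hsumg : 2 ≤ ∑ u ∈ s, (β u + β (σ u) - I.wtE p u (σ u)) := by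
    have hva : q v0 = some a := hq.1 _ _ hav
    have has : a ∈ s := hmem' a v0 hav
    have hvs : v0 ∈ s := hmem' v0 a hva
    have hane : a ≠ v0 := by
      rintro rfl
      rcases hI.2.2.2.2 a a hadjav.1 with ⟨hx, hy⟩ | ⟨hx, hy⟩
      · exact Finset.disjoint_left.1 hI.2.2.1 hx hy
      · exact Finset.disjoint_left.1 hI.2.2.1 hy hx
    have hga : 1 ≤ β a + β (σ a) - I.wtE p a (σ a) := by
      rw [hσ a v0 hav]; linarith
    have hgv : 1 ≤ β v0 + β (σ v0) - I.wtE p v0 (σ v0) := by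
      rw [hσ v0 a hva, I.wtE_comm p v0 a]; linarith
    have hpairsum : ∑ u ∈ ({a, v0} : Finset V), (β u + β (σ u) - I.wtE p u (σ u))
        = (β a + β (σ a) - I.wtE p a (σ a)) + (β v0 + β (σ v0) - I.wtE p v0 (σ v0)) :=
      Finset.sum_pair hane
    have hsub : ({a, v0} : Finset V) ⊆ s := by
      intro x hx
      rcases Finset.mem_insert.1 hx with rfl | hx
      · exact has
      · rw [Finset.mem_singleton.1 hx]; exact hvs
    have hmono := Finset.sum_le_sum_of_subset_of_nonneg hsub (fun i hi _ => hgnn i hi)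
    rw [hpairsum] at hmono
    linarith
  have hEg : ∑ u ∈ s, (β u + β (σ u) - I.wtE p u (σ u))
      = 2 * ∑ u ∈ s, β u - 2 * ∑ u ∈ s, F u := by
    have hFpair : ∀ u ∈ s, I.wtE p u (σ u) = F u + F (σ u) := by
      intro u hu
      obtain ⟨w, hw⟩ := Option.isSome_iff_exists.1 ((hmem u).1 hu)
      rw [hσ u w hw, hF]
      exact (I.vote_pair hm hq hw).symm
    calc ∑ u ∈ s, (β u + β (σ u) - I.wtE p u (σ u))
        = ∑ u ∈ s, (β u + β (σ u) - (F u + F (σ u))) :=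
          Finset.sum_congr rfl (fun u hu => by rw [hFpair u hu])
      _ = ∑ u ∈ s, β u + ∑ u ∈ s, β (σ u) - (∑ u ∈ s, F u + ∑ u ∈ s, F (σ u)) := by
          rw [Finset.sum_sub_distrib, Finset.sum_add_distrib, Finset.sum_add_distrib]
      _ = 2 * ∑ u ∈ s, β u - 2 * ∑ u ∈ s, F u := by
          rw [Inst.sum_comp_invol s σ h1s h2s β, Inst.sum_comp_invol s σ h1s h2s F]; ring
  have hFs : ∑ u ∈ s, F u ≤ ∑ u ∈ s, β u - 1 := by linarith [hEg ▸ hsumg]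
  have hsplitF := Finset.sum_filter_add_sum_filter_not Finset.univ (fun u => (q u).isSome) F
  have hsplitβ := Finset.sum_filter_add_sum_filter_not Finset.univ (fun u => (q u).isSome) β
  rw [← hs] at hsplitF hsplitβ
  have hrest : ∑ u ∈ Finset.univ.filter (fun u => ¬ (q u).isSome), F u
      ≤ ∑ u ∈ Finset.univ.filter (fun u => ¬ (q u).isSome), β u := by
    apply Finset.sum_le_sum
    intro u hu
    simp only [Finset.mem_filter, Option.not_isSome_iff_eq_none] at hu
    simp only [hF]
    rw [I.vote_unmatched hu.2]
    exact hwit.2.2.2 u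
  have hdeltaF : I.delta q p = ∑ u : V, F u := by
    rw [I.delta_eq_sum p q, hF]
  have hβ0 := hwit.2.1
  have hneg : I.delta p q = - I.delta q p := by unfold Inst.delta; ring
  rw [hneg, hdeltaF]
  linarith

end PopMatch
end

section
/- Let S be any stable matching of the marriage instance G_φ. Then: (1) S leaves s and t unmatched, contains every basic edge, and contains no consistency edge; (2) for every variable x, the gadget of ¬x is either in true state or in false state in S; (3) every gadget of an occurrence of x is either in true state or in false state in S; (4) if the gadget of ¬x is in true state in S, then all gadgets of x are in false state in S. Conversely, every matching of G_φ satisfying (1)–(4) is stable. -/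
open scoped Classical

namespace PopMatch

/-- A 3SAT formula: `m` clauses over `n` variables, each clause a nonempty
list of at most three literals (a literal is a variable together with a
polarity, `true` meaning a positive occurrence). -/
structure Formula where
  n : ℕ
  m : ℕ
  clauses : Fin m → List (Fin n × Bool)
  nonempty : ∀ i, clauses i ≠ []
  three : ∀ i, (clauses i).length ≤ 3

namespace Formula

variable (F : Formula)

/-- The variables of the transformed formula `φ`: `X_1, …, X_{2n}`, where
`X_{n+i}` stands for `¬X_i`. -/
abbrev Var := Fin (2 * F.n)

/-- The transformed variable corresponding to a literal: `X_i ↦ X_i` and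
`¬X_i ↦ X_{n+i}`. -/
def tvar (l : Fin F.n × Bool) : F.Var :=
  if l.2 then ⟨l.1.val, by have := l.1.isLt; omega⟩
  else ⟨F.n + l.1.val, by have := l.1.isLt; omega⟩

/-- The variable `X_k` (for `k < n`). -/
def varFst (k : Fin F.n) : F.Var := ⟨k.val, by have := k.isLt; omega⟩

/-- The variable `X_{n+k}` (for `k < n`). -/
def varSnd (k : Fin F.n) : F.Var := ⟨F.n + k.val, by have := k.isLt; omega⟩

/-- The positive clauses of the transformed formula `φ`:
`C_1, …, C_m` are the original clauses with `¬X_i` replaced by `X_{n+i}`, and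
`C_{m+i} = X_i ∨ X_{n+i}` for `1 ≤ i ≤ n`. -/
def posClause (i : Fin (F.m + F.n)) : List F.Var :=
  if h : i.val < F.m then (F.clauses ⟨i.val, h⟩).map F.tvar
  else [⟨i.val - F.m, by have := i.isLt; omega⟩,
        ⟨F.n + (i.val - F.m), by have := i.isLt; omega⟩]

theorem posClause_length_le (i : Fin (F.m + F.n)) : (F.posClause i).length ≤ 3 := by
  unfold posClause
  split
  · simpa using F.three _
  · simp

theorem posClause_ne_nil (i : Fin (F.m + F.n)) : F.posClause i ≠ [] := by
  unfold posClause
  split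
  · simpa using F.nonempty _
  · simp

/-- An assignment satisfies the transformed formula `φ` if every positive
clause `C_i` contains a true variable and every negative clause
`D_{m+n+i} = ¬X_i ∨ ¬X_{n+i}` contains a false one. -/
def Sat (A : F.Var → Bool) : Prop :=
  (∀ i : Fin (F.m + F.n), ∃ x ∈ F.posClause i, A x = true) ∧
  (∀ k : Fin F.n, A (F.varFst k) = false ∨ A (F.varSnd k) = false)

/-- The index (among `1, …, n`) of the negative clause containing the unique
negated occurrence `¬x` of the variable `x`. -/
def negIdx (x : F.Var) : Fin F.n :=
  if h : x.val < F.n then ⟨x.val, h⟩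
  else ⟨x.val - F.n, by have := x.isLt; omega⟩

/-- An occurrence of a (positive) literal: a positive clause index together
with a position inside that clause. -/
def Occ := {q : Fin (F.m + F.n) × Fin 3 // q.2.val < (F.posClause q.1).length}

instance : DecidableEq F.Occ := by unfold Occ; infer_instance

instance : Fintype F.Occ := by unfold Occ; exact Subtype.fintype _

/-- The variable occurring at the occurrence `o`. -/
def litOf (o : F.Occ) : F.Var := (F.posClause o.1.1).get ⟨o.1.2.val, o.2⟩

/-- The list of all occurrences in the positive clause `i`, in clause order. -/
def occList (i : Fin (F.m + F.n)) : List F.Occ :=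
  (List.finRange (F.posClause i).length).map
    (fun j => ⟨(i, ⟨j.val, lt_of_lt_of_le j.isLt (F.posClause_length_le i)⟩), j.isLt⟩)

/-- The list of all occurrences of the variable `x`, in a fixed order. -/
def occsOfVar (x : F.Var) : List F.Occ :=
  ((List.finRange (F.m + F.n)).map (fun i => F.occList i)).flatten.filter
    (fun o => decide (F.litOf o = x))

end Formula

end PopMatch

namespace PopMatch

open Formula

/-- The vertices of the marriage instance `G_φ`: the vertices `s`, `t`, the
vertices `u_i`, `v_i` for `0 ≤ i ≤ m+2n`, the gadget vertices
`a, b, a', b'` of every occurrence of a (positive) literal, and the gadget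
vertices `c, d, c', d'` of the unique negated occurrence of every variable. -/
inductive GV (F : Formula) where
  | s : GV F
  | t : GV F
  | u : Fin (F.m + 2 * F.n + 1) → GV F
  | vv : Fin (F.m + 2 * F.n + 1) → GV F
  | pa : F.Occ → GV F
  | pb : F.Occ → GV F
  | pa' : F.Occ → GV F
  | pb' : F.Occ → GV F
  | nc : F.Var → GV F
  | nd : F.Var → GV F
  | nc' : F.Var → GV F
  | nd' : F.Var → GV F
  deriving DecidableEq, Fintype

namespace GV

variable {F : Formula}

/-- The preference lists of `G_φ`. -/
def plist (F : Formula) : GV F → List (GV F)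
  | .s => [.u ⟨0, by omega⟩]
  | .t => [.vv ⟨F.m + 2 * F.n, by omega⟩]
  | .u i =>
      if h0 : i.val = 0 then [.vv i, .s]
      else if h : i.val ≤ F.m + F.n then
        (F.occList ⟨i.val - 1, by omega⟩).map GV.pb ++ [.vv i]
      else
        [.vv i,
         .nd (F.varFst ⟨i.val - (F.m + F.n + 1), by have := i.isLt; omega⟩),
         .nd (F.varSnd ⟨i.val - (F.m + F.n + 1), by have := i.isLt; omega⟩)]
  | .vv i =>
      if h0 : i.val = F.m + 2 * F.n then [.u i, .t]
      else if h : i.val < F.m + F.n then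
        .u i :: (F.occList ⟨i.val, h⟩).map GV.pa
      else
        [.nc (F.varFst ⟨i.val - (F.m + F.n), by have := i.isLt; omega⟩),
         .nc (F.varSnd ⟨i.val - (F.m + F.n), by have := i.isLt; omega⟩),
         .u i]
  | .pa o => [.pb o, .nd (F.litOf o),
      .vv ⟨o.1.1.val, by have := o.1.1.isLt; omega⟩, .pb' o]
  | .pa' o => [.pb' o, .pb o]
  | .pb o => [.pa' o, .pa o, .u ⟨o.1.1.val + 1, by have := o.1.1.isLt; omega⟩]
  | .pb' o => [.pa o, .pa' o]
  | .nc x => [.nd x, .nd' x,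
      .vv ⟨F.m + F.n + (F.negIdx x).val, by have := (F.negIdx x).isLt; omega⟩]
  | .nc' x => [.nd' x, .nd x]
  | .nd x => .nc' x :: (F.occsOfVar x).map GV.pa ++
      [.u ⟨F.m + F.n + 1 + (F.negIdx x).val, by have := (F.negIdx x).isLt; omega⟩,
       .nc x]
  | .nd' x => [.nc x, .nc' x]

/-- The bipartition side of a vertex of `G_φ` (`true` = the side of the
`a`-vertices). -/
def side : GV F → Bool
  | .t => true
  | .u _ => true
  | .pa _ => true
  | .pa' _ => true
  | .nc _ => true
  | .nc' _ => true
  | _ => false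

end GV

/-- The marriage instance `G_φ` associated with the transformed 3SAT
formula `φ`. -/
def Gphi (F : Formula) : Inst (GV F) :=
  ⟨Finset.univ.filter (fun w => GV.side w = true),
   Finset.univ.filter (fun w => GV.side w = false),
   GV.plist F⟩

variable {F : Formula}

/-- The gadget of the occurrence `o` is in **true state** in the matching `p`
(it contains the edges `(a_i, b'_i)` and `(a'_i, b_i)`). -/
def PosTrue (p : GV F → Option (GV F)) (o : F.Occ) : Prop :=
  p (GV.pa o) = some (GV.pb' o) ∧ p (GV.pa' o) = some (GV.pb o)

/-- The gadget of the occurrence `o` is in **false state** in the matching `p`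
(it contains the edges `(a_i, b_i)` and `(a'_i, b'_i)`). -/
def PosFalse (p : GV F → Option (GV F)) (o : F.Occ) : Prop :=
  p (GV.pa o) = some (GV.pb o) ∧ p (GV.pa' o) = some (GV.pb' o)

/-- The gadget of `¬x` is in **true state** in the matching `p`
(it contains the edges `(c_k, d_k)` and `(c'_k, d'_k)`). -/
def NegTrue (p : GV F → Option (GV F)) (x : F.Var) : Prop :=
  p (GV.nc x) = some (GV.nd x) ∧ p (GV.nc' x) = some (GV.nd' x)

/-- The gadget of `¬x` is in **false state** in the matching `p`
(it contains the edges `(c_k, d'_k)` and `(c'_k, d_k)`). -/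
def NegFalse (p : GV F → Option (GV F)) (x : F.Var) : Prop :=
  p (GV.nc x) = some (GV.nd' x) ∧ p (GV.nc' x) = some (GV.nd x)

end PopMatch


namespace PopMatch
open GV
variable {F : Formula}

@[simp] lemma Gphi_plist : (Gphi F).plist = GV.plist F := rfl

lemma mem_occList {o : F.Occ} {i : Fin (F.m + F.n)} : o ∈ F.occList i ↔ o.1.1 = i := by
  unfold Formula.occList
  refine List.mem_map.trans ?_
  simp only [List.mem_finRange]
  constructor
  · rintro ⟨j, -, rfl⟩; rfl
  · rintro rfl
    refine ⟨⟨o.1.2.val, o.2⟩, trivial, ?_⟩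
    apply Subtype.ext
    exact Prod.ext rfl (Fin.ext rfl)

lemma mem_occsOfVar {o : F.Occ} {x : F.Var} : o ∈ F.occsOfVar x ↔ F.litOf o = x := by
  unfold Formula.occsOfVar
  simp only [List.mem_filter, List.mem_flatten, List.mem_map, List.mem_finRange,
    decide_eq_true_eq]
  constructor
  · exact fun h => h.2
  · intro h
    exact ⟨⟨F.occList o.1.1, ⟨o.1.1, trivial, rfl⟩, mem_occList.2 rfl⟩, h⟩

lemma idxlt_left {α : Type*} [DecidableEq α] {v w : α} {l₁ l₂ : List α}
    (hv : v ∈ l₁) (hw : w ∉ l₁) :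
    (l₁ ++ l₂).idxOf v < (l₁ ++ l₂).idxOf w := by
  rw [List.idxOf_append_of_mem hv, List.idxOf_append_of_notMem hw]
  exact lt_of_lt_of_le (List.idxOf_lt_length_iff.2 hv) (Nat.le_add_right _ _)

lemma adjI {u v : GV F} (h1 : v ∈ GV.plist F u) (h2 : u ∈ GV.plist F v) :
    (Gphi F).adj u v := ⟨h1, h2⟩

lemma prefI {u v w : GV F} (h1 : v ∈ GV.plist F u) (h2 : w ∈ GV.plist F u)
    (h3 : (GV.plist F u).idxOf v < (GV.plist F u).idxOf w) :
    (Gphi F).pref u v w := ⟨h1, h2, h3⟩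

lemma pref_idx {u v w : GV F} (h : (Gphi F).pref u v w) :
    (GV.plist F u).idxOf v < (GV.plist F u).idxOf w := h.2.2

lemma pref_mem1 {u v w : GV F} (h : (Gphi F).pref u v w) : v ∈ GV.plist F u := h.1

lemma plist_nd (x : F.Var) : GV.plist F (GV.nd x) =
    (GV.nc' x :: (F.occsOfVar x).map GV.pa) ++
    [GV.u ⟨F.m + F.n + 1 + (F.negIdx x).val, by have := (F.negIdx x).isLt; omega⟩,
     GV.nc x] := rfl

lemma plist_u_zero {i : Fin (F.m + 2*F.n + 1)} (h : i.val = 0) :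
    GV.plist F (GV.u i) = [GV.vv i, GV.s] := by simp [GV.plist, h]

lemma plist_u_mid {i : Fin (F.m + 2*F.n + 1)} (h0 : i.val ≠ 0) (h : i.val ≤ F.m + F.n)
    (hh : i.val - 1 < F.m + F.n) :
    GV.plist F (GV.u i) = (F.occList ⟨i.val - 1, hh⟩).map GV.pb ++ [GV.vv i] := by
  simp [GV.plist, h0, h]

lemma plist_u_hi {i : Fin (F.m + 2*F.n + 1)} (h : ¬ i.val ≤ F.m + F.n)
    (hh : i.val - (F.m + F.n + 1) < F.n) :
    GV.plist F (GV.u i) = [GV.vv i,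
      GV.nd (F.varFst ⟨i.val - (F.m + F.n + 1), hh⟩),
      GV.nd (F.varSnd ⟨i.val - (F.m + F.n + 1), hh⟩)] := by
  have h0 : i.val ≠ 0 := by omega
  simp [GV.plist, h0, h]

lemma plist_vv_top {i : Fin (F.m + 2*F.n + 1)} (h : i.val = F.m + 2*F.n) :
    GV.plist F (GV.vv i) = [GV.u i, GV.t] := by simp [GV.plist, h]

lemma plist_vv_lo {i : Fin (F.m + 2*F.n + 1)} (h : i.val < F.m + F.n) :
    GV.plist F (GV.vv i) = GV.u i :: (F.occList ⟨i.val, h⟩).map GV.pa := by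
  have h0 : i.val ≠ F.m + 2*F.n := by omega
  simp [GV.plist, h0, h]

lemma plist_vv_hi {i : Fin (F.m + 2*F.n + 1)} (h0 : i.val ≠ F.m + 2*F.n)
    (h : ¬ i.val < F.m + F.n) (hh : i.val - (F.m + F.n) < F.n) :
    GV.plist F (GV.vv i) = [GV.nc (F.varFst ⟨i.val - (F.m + F.n), hh⟩),
      GV.nc (F.varSnd ⟨i.val - (F.m + F.n), hh⟩), GV.u i] := by
  simp [GV.plist, h0, h]

lemma negIdx_varFst (k : Fin F.n) : F.negIdx (F.varFst k) = k := by
  apply Fin.ext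
  simp [Formula.negIdx, Formula.varFst, k.isLt]

lemma negIdx_varSnd (k : Fin F.n) : F.negIdx (F.varSnd k) = k := by
  apply Fin.ext
  have : ¬ (F.n + k.val < F.n) := by omega
  simp [Formula.negIdx, Formula.varSnd, this]

variable {p : GV F → Option (GV F)}

lemma prefOver_none {u v : GV F} (h : p u = none) : (Gphi F).PrefOver p u v := by
  simp [Inst.PrefOver, h]

lemma prefOver_some {u v w : GV F} (h : p u = some w) :
    (Gphi F).PrefOver p u v ↔ (Gphi F).pref u v w := by
  simp [Inst.PrefOver, h]

lemma forced (hs : (Gphi F).Stable p) {u v : GV F} (hadj : (Gphi F).adj u v)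
    (h1 : (Gphi F).PrefOver p u v) (h2 : (Gphi F).PrefOver p v u) : p u = some v := by
  by_contra h
  exact hs.2 u v ⟨hadj, h, h1, h2⟩

lemma partner_mem (hm : (Gphi F).IsMatching p) {u v : GV F} (h : p u = some v) :
    v ∈ GV.plist F u := (hm.2 u v h).1

lemma partner_symm (hm : (Gphi F).IsMatching p) {u v : GV F} (h : p u = some v) :
    p v = some u := hm.1 u v h

end PopMatch
namespace PopMatch
open GV
variable {F : Formula} {p : GV F → Option (GV F)}

lemma posStates (hs : (Gphi F).Stable p) (o : F.Occ) : PosTrue p o ∨ PosFalse p o := by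
  have hm := hs.1
  have key : p (GV.pa' o) = some (GV.pb' o) ∨ p (GV.pb' o) = some (GV.pa o) := by
    by_contra hc
    push_neg at hc
    obtain ⟨h1, h2⟩ := hc
    refine h1 (forced hs (adjI (by simp [GV.plist]) (by simp [GV.plist])) ?_ ?_)
    · rcases hp : p (GV.pa' o) with _ | w
      · exact prefOver_none hp
      · rw [prefOver_some hp]
        have hw := partner_mem hm hp
        simp [GV.plist] at hw
        rcases hw with rfl | rfl
        · exact absurd hp h1
        · exact prefI (by simp [GV.plist]) (by simp [GV.plist])
            (by simp [GV.plist, List.idxOf_cons])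
    · rcases hp : p (GV.pb' o) with _ | w
      · exact prefOver_none hp
      · have hw := partner_mem hm hp
        simp [GV.plist] at hw
        rcases hw with rfl | rfl
        · exact absurd hp h2
        · exact absurd (partner_symm hm hp) h1
  rcases key with hB | hA
  · right
    refine ⟨?_, hB⟩
    by_contra hne
    refine hne (forced hs (adjI (by simp [GV.plist]) (by simp [GV.plist])) ?_ ?_)
    · rcases hp : p (GV.pa o) with _ | w
      · exact prefOver_none hp
      · rw [prefOver_some hp]
        have hw := partner_mem hm hp
        simp [GV.plist] at hw
        rcases hw with rfl | rfl | rfl | rfl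
        · exact absurd hp hne
        · exact prefI (by simp [GV.plist]) (by simp [GV.plist])
            (by simp [GV.plist, List.idxOf_cons])
        · exact prefI (by simp [GV.plist]) (by simp [GV.plist])
            (by simp [GV.plist, List.idxOf_cons])
        · have h3 := partner_symm hm hp
          have h4 := partner_symm hm hB
          rw [h3] at h4
          simp at h4
    · rcases hp : p (GV.pb o) with _ | w
      · exact prefOver_none hp
      · rw [prefOver_some hp]
        have hw := partner_mem hm hp
        simp [GV.plist] at hw
        rcases hw with rfl | rfl | rfl
        · have h3 := partner_symm hm hp
          rw [hB] at h3
          simp at h3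
        · exact absurd (partner_symm hm hp) hne
        · exact prefI (by simp [GV.plist]) (by simp [GV.plist])
            (by simp [GV.plist, List.idxOf_cons])
  · left
    have hpa : p (GV.pa o) = some (GV.pb' o) := partner_symm hm hA
    refine ⟨hpa, ?_⟩
    by_cases hgoal : p (GV.pa' o) = some (GV.pb o)
    · exact hgoal
    refine forced hs (adjI (by simp [GV.plist]) (by simp [GV.plist])) ?_ ?_
    · rcases hp : p (GV.pa' o) with _ | w
      · exact prefOver_none hp
      · have hw := partner_mem hm hp
        simp [GV.plist] at hw
        rcases hw with rfl | rfl
        · have h3 := partner_symm hm hp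
          rw [hA] at h3
          simp at h3
        · exact absurd hp hgoal
    · rcases hp : p (GV.pb o) with _ | w
      · exact prefOver_none hp
      · rw [prefOver_some hp]
        have hw := partner_mem hm hp
        simp [GV.plist] at hw
        rcases hw with rfl | rfl | rfl
        · exact absurd (partner_symm hm hp) hgoal
        · have h3 := partner_symm hm hp
          rw [hpa] at h3
          simp at h3
        · exact prefI (by simp [GV.plist]) (by simp [GV.plist])
            (by simp [GV.plist, List.idxOf_cons])

lemma pa_partner (hs : (Gphi F).Stable p) (o : F.Occ) :
    p (GV.pa o) = some (GV.pb' o) ∨ p (GV.pa o) = some (GV.pb o) :=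
  (posStates hs o).imp (fun h => h.1) (fun h => h.1)

lemma pb_partner (hs : (Gphi F).Stable p) (o : F.Occ) :
    p (GV.pb o) = some (GV.pa' o) ∨ p (GV.pb o) = some (GV.pa o) :=
  (posStates hs o).imp (fun h => partner_symm hs.1 h.2) (fun h => partner_symm hs.1 h.1)

end PopMatch
namespace PopMatch
open GV
variable {F : Formula} {p : GV F → Option (GV F)}

lemma basic_edges (hs : (Gphi F).Stable p) : ∀ i, p (GV.vv i) = some (GV.u i) := by
  have hm := hs.1
  suffices main : ∀ k : ℕ, ∀ i : Fin (F.m + 2*F.n + 1), F.m + 2*F.n - i.val = k →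
      p (GV.vv i) = some (GV.u i) by
    intro i; exact main _ i rfl
  intro k
  induction k using Nat.strong_induction_on with
  | _ k IH =>
  intro i hk
  by_contra hvv
  have hu_ne : p (GV.u i) ≠ some (GV.vv i) := fun h => hvv (partner_symm hm h)
  have humem : GV.u i ∈ GV.plist F (GV.vv i) := by
    by_cases htop : i.val = F.m + 2*F.n
    · rw [plist_vv_top htop]; simp
    · by_cases hlo : i.val < F.m + F.n
      · rw [plist_vv_lo hlo]; simp
      · have hh : i.val - (F.m + F.n) < F.n := by have := i.isLt; omega
        rw [plist_vv_hi htop hlo hh]; simp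
  have hvmem : GV.vv i ∈ GV.plist F (GV.u i) := by
    by_cases hz : i.val = 0
    · rw [plist_u_zero hz]; simp
    · by_cases hmid : i.val ≤ F.m + F.n
      · have hh : i.val - 1 < F.m + F.n := by omega
        rw [plist_u_mid hz hmid hh]; simp
      · have hh : i.val - (F.m + F.n + 1) < F.n := by have := i.isLt; omega
        rw [plist_u_hi hmid hh]; simp
  refine hvv (forced hs (adjI humem hvmem) ?_ ?_)
  · -- PrefOver (vv i) (u i)
    rcases hp : p (GV.vv i) with _ | w
    · exact prefOver_none hp
    · rw [prefOver_some hp]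
      have hw := partner_mem hm hp
      by_cases htop : i.val = F.m + 2*F.n
      · rw [plist_vv_top htop] at hw
        simp at hw
        rcases hw with rfl | rfl
        · exact absurd hp hvv
        · exact prefI humem (by rw [plist_vv_top htop]; simp)
            (by rw [plist_vv_top htop]; simp [List.idxOf_cons])
      · by_cases hlo : i.val < F.m + F.n
        · rw [plist_vv_lo hlo] at hw
          simp at hw
          rcases hw with rfl | ⟨o, -, rfl⟩
          · exact absurd hp hvv
          · have h3 := partner_symm hm hp
            rcases pa_partner hs o with h4 | h4 <;> rw [h3] at h4 <;> simp at h4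
        · -- cascade case
          exfalso
          have hh : i.val - (F.m + F.n) < F.n := by have := i.isLt; omega
          rw [plist_vv_hi htop hlo hh] at hw
          simp at hw
          have hilt : i.val < F.m + 2*F.n := by have := i.isLt; omega
          have hcasc : ∀ y : F.Var, (F.negIdx y).val = i.val - (F.m + F.n) →
              w = GV.nc y → False := by
            intro y hy hwy
            subst hwy
            have hncy : p (GV.nc y) = some (GV.vv i) := partner_symm hm hp
            have hIH : p (GV.vv ⟨i.val + 1, by omega⟩) =
                some (GV.u ⟨i.val + 1, by omega⟩) :=
              IH (F.m + 2*F.n - (i.val + 1)) (by omega) _ rfl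
            have step1 : p (GV.nc' y) = some (GV.nd' y) := by
              by_contra hne
              refine hne (forced hs (adjI (by simp [GV.plist]) (by simp [GV.plist])) ?_ ?_)
              · rcases hq : p (GV.nc' y) with _ | w'
                · exact prefOver_none hq
                · rw [prefOver_some hq]
                  have hw' := partner_mem hm hq
                  simp [GV.plist] at hw'
                  rcases hw' with rfl | rfl
                  · exact absurd hq hne
                  · exact prefI (by simp [GV.plist]) (by simp [GV.plist])
                      (by simp [GV.plist, List.idxOf_cons])
              · rcases hq : p (GV.nd' y) with _ | w'
                · exact prefOver_none hq
                · have hw' := partner_mem hm hq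
                  simp [GV.plist] at hw'
                  rcases hw' with rfl | rfl
                  · have h3 := partner_symm hm hq
                    rw [hncy] at h3; simp at h3
                  · exact absurd (partner_symm hm hq) hne
            have hju : (⟨F.m + F.n + 1 + (F.negIdx y).val,
                by have := (F.negIdx y).isLt; omega⟩ : Fin (F.m + 2*F.n + 1)) =
                ⟨i.val + 1, by omega⟩ := by
              apply Fin.ext; simp; omega
            have hjv : (⟨F.m + F.n + (F.negIdx y).val,
                by have := (F.negIdx y).isLt; omega⟩ : Fin (F.m + 2*F.n + 1)) = i := by
              apply Fin.ext; simp; omega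
            have hplist : GV.plist F (GV.nc y) = [GV.nd y, GV.nd' y, GV.vv i] := by
              rw [← hjv]; rfl
            rcases hq : p (GV.nd y) with _ | w'
            · have hcon : p (GV.nd y) = some (GV.nc y) := by
                refine forced hs (adjI (by rw [plist_nd]; simp) (by rw [hplist]; simp))
                  (prefOver_none hq) ?_
                rw [prefOver_some hncy]
                refine prefI ?_ ?_ ?_ <;> rw [hplist] <;>
                  simp [List.idxOf_cons]
              rw [hq] at hcon; simp at hcon
            · have hw' := partner_mem hm hq
              rw [plist_nd] at hw'
              simp [mem_occsOfVar] at hw'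
              rcases hw' with rfl | ⟨o', -, rfl⟩ | rfl | rfl
              · have h3 := partner_symm hm hq
                rw [step1] at h3; simp at h3
              · have h3 := partner_symm hm hq
                rcases pa_partner hs o' with h4 | h4 <;> rw [h3] at h4 <;> simp at h4
              · rw [hju] at hq
                have h3 := partner_symm hm hq
                rw [partner_symm hm hIH] at h3
                simp at h3
              · have h3 := partner_symm hm hq
                rw [hncy] at h3; simp at h3
          rcases hw with rfl | rfl | rfl
          · exact hcasc _ (congrArg Fin.val (negIdx_varFst _)) rfl
          · exact hcasc _ (congrArg Fin.val (negIdx_varSnd _)) rfl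
          · exact hvv hp
  · -- PrefOver (u i) (vv i)
    rcases hp : p (GV.u i) with _ | w
    · exact prefOver_none hp
    · rw [prefOver_some hp]
      have hw := partner_mem hm hp
      by_cases hz : i.val = 0
      · rw [plist_u_zero hz] at hw
        simp at hw
        rcases hw with rfl | rfl
        · exact absurd hp hu_ne
        · exact prefI hvmem (by rw [plist_u_zero hz]; simp)
            (by rw [plist_u_zero hz]; simp [List.idxOf_cons])
      · by_cases hmid : i.val ≤ F.m + F.n
        · have hh : i.val - 1 < F.m + F.n := by omega
          rw [plist_u_mid hz hmid hh] at hw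
          simp at hw
          rcases hw with ⟨o, -, rfl⟩ | rfl
          · exfalso
            have h3 := partner_symm hm hp
            rcases pb_partner hs o with h4 | h4 <;> rw [h3] at h4 <;> simp at h4
          · exact absurd hp hu_ne
        · have hh : i.val - (F.m + F.n + 1) < F.n := by have := i.isLt; omega
          rw [plist_u_hi hmid hh] at hw
          simp at hw
          rcases hw with rfl | rfl | rfl
          · exact absurd hp hu_ne
          · exact prefI hvmem (by rw [plist_u_hi hmid hh]; simp)
              (by rw [plist_u_hi hmid hh]; simp [List.idxOf_cons])
          · exact prefI hvmem (by rw [plist_u_hi hmid hh]; simp)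
              (by rw [plist_u_hi hmid hh]; simp [List.idxOf_cons])

end PopMatch
namespace PopMatch
open GV
variable {F : Formula} {p : GV F → Option (GV F)}

lemma s_unmatched (hs : (Gphi F).Stable p) : p GV.s = none := by
  have hm := hs.1
  rcases hp : p GV.s with _ | w
  · rfl
  · exfalso
    have hw := partner_mem hm hp
    simp [GV.plist] at hw
    subst hw
    have h3 := partner_symm hm hp
    have h4 := partner_symm hm (basic_edges hs 0)
    rw [h3] at h4; simp at h4

lemma t_unmatched (hs : (Gphi F).Stable p) : p GV.t = none := by
  have hm := hs.1
  rcases hp : p GV.t with _ | w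
  · rfl
  · exfalso
    have hw := partner_mem hm hp
    simp [GV.plist] at hw
    subst hw
    have h3 := partner_symm hm hp
    rw [basic_edges hs _] at h3; simp at h3

lemma nd_partner (hs : (Gphi F).Stable p) (x : F.Var) :
    p (GV.nd x) = none ∨ p (GV.nd x) = some (GV.nc' x) ∨ p (GV.nd x) = some (GV.nc x) := by
  have hm := hs.1
  rcases hp : p (GV.nd x) with _ | w
  · exact Or.inl rfl
  · have hw := partner_mem hm hp
    rw [plist_nd] at hw
    simp [mem_occsOfVar] at hw
    rcases hw with rfl | ⟨o, -, rfl⟩ | rfl | rfl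
    · exact Or.inr (Or.inl rfl)
    · exfalso
      have h3 := partner_symm hm hp
      rcases pa_partner hs o with h4 | h4 <;> rw [h3] at h4 <;> simp at h4
    · exfalso
      have h3 := partner_symm hm hp
      rw [partner_symm hm (basic_edges hs _)] at h3; simp at h3
    · exact Or.inr (Or.inr rfl)

lemma nc_partner (hs : (Gphi F).Stable p) (x : F.Var) :
    p (GV.nc x) = none ∨ p (GV.nc x) = some (GV.nd x) ∨ p (GV.nc x) = some (GV.nd' x) := by
  have hm := hs.1
  rcases hp : p (GV.nc x) with _ | w
  · exact Or.inl rfl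
  · have hw := partner_mem hm hp
    simp [GV.plist] at hw
    rcases hw with rfl | rfl | rfl
    · exact Or.inr (Or.inl rfl)
    · exact Or.inr (Or.inr rfl)
    · exfalso
      have h3 := partner_symm hm hp
      rw [basic_edges hs _] at h3; simp at h3

lemma negStates (hs : (Gphi F).Stable p) (x : F.Var) : NegTrue p x ∨ NegFalse p x := by
  have hm := hs.1
  have key : p (GV.nc' x) = some (GV.nd' x) ∨ p (GV.nd' x) = some (GV.nc x) := by
    by_contra hc
    push_neg at hc
    obtain ⟨h1, h2⟩ := hc
    refine h1 (forced hs (adjI (by simp [GV.plist]) (by simp [GV.plist])) ?_ ?_)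
    · rcases hq : p (GV.nc' x) with _ | w
      · exact prefOver_none hq
      · rw [prefOver_some hq]
        have hw := partner_mem hm hq
        simp [GV.plist] at hw
        rcases hw with rfl | rfl
        · exact absurd hq h1
        · exact prefI (by simp [GV.plist]) (by simp [GV.plist])
            (by simp [GV.plist, List.idxOf_cons])
    · rcases hq : p (GV.nd' x) with _ | w
      · exact prefOver_none hq
      · have hw := partner_mem hm hq
        simp [GV.plist] at hw
        rcases hw with rfl | rfl
        · exact absurd hq h2
        · exact absurd (partner_symm hm hq) h1
  rcases key with hT | hF
  · left
    refine ⟨?_, hT⟩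
    by_contra hgoal
    refine hgoal (forced hs (adjI (by simp [GV.plist]) (by rw [plist_nd]; simp)) ?_ ?_)
    · rcases hq : p (GV.nc x) with _ | w
      · exact prefOver_none hq
      · rw [prefOver_some hq]
        have hw := partner_mem hm hq
        simp [GV.plist] at hw
        rcases hw with rfl | rfl | rfl
        · exact absurd hq hgoal
        · exfalso
          have h3 := partner_symm hm hq
          rw [partner_symm hm hT] at h3; simp at h3
        · exfalso
          have h3 := partner_symm hm hq
          rw [basic_edges hs _] at h3; simp at h3
    · rcases nd_partner hs x with hq | hq | hq
      · exact prefOver_none hq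
      · exfalso
        have h3 := partner_symm hm hq
        rw [hT] at h3; simp at h3
      · exact absurd (partner_symm hm hq) hgoal
  · right
    have hnc : p (GV.nc x) = some (GV.nd' x) := partner_symm hm hF
    refine ⟨hnc, ?_⟩
    by_contra hgoal
    refine hgoal (forced hs (adjI (by simp [GV.plist]) (by rw [plist_nd]; simp)) ?_ ?_)
    · rcases hq : p (GV.nc' x) with _ | w
      · exact prefOver_none hq
      · rw [prefOver_some hq]
        have hw := partner_mem hm hq
        simp [GV.plist] at hw
        rcases hw with rfl | rfl
        · exfalso
          have h3 := partner_symm hm hq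
          rw [hF] at h3; simp at h3
        · exact absurd hq hgoal
    · rcases nd_partner hs x with hq | hq | hq
      · exact prefOver_none hq
      · exact absurd (partner_symm hm hq) hgoal
      · exfalso
        have h3 := partner_symm hm hq
        rw [hnc] at h3; simp at h3

lemma negImp (hs : (Gphi F).Stable p) (x : F.Var) (hT : NegTrue p x)
    (o : F.Occ) (ho : F.litOf o = x) : PosFalse p o := by
  have hm := hs.1
  rcases posStates hs o with hPT | hPF
  · exfalso
    subst ho
    have hnd : p (GV.nd (F.litOf o)) = some (GV.nc (F.litOf o)) := partner_symm hm hT.1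
    have hforce : p (GV.pa o) = some (GV.nd (F.litOf o)) := by
      refine forced hs (adjI (by simp [GV.plist]) (by rw [plist_nd]; simp [mem_occsOfVar]))
        ?_ ?_
      · rw [prefOver_some hPT.1]
        exact prefI (by simp [GV.plist]) (by simp [GV.plist])
          (by simp [GV.plist, List.idxOf_cons])
      · rw [prefOver_some hnd]
        refine prefI (by rw [plist_nd]; simp [mem_occsOfVar]) (by rw [plist_nd]; simp) ?_
        rw [plist_nd]
        apply idxlt_left
        · simp [mem_occsOfVar]
        · simp
    rw [hPT.1] at hforce; simp at hforce
  · exact hPF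

end PopMatch
namespace PopMatch
open GV
variable {F : Formula} {p : GV F → Option (GV F)}

lemma converse (hm : (Gphi F).IsMatching p)
    (hu : ∀ i, p (GV.u i) = some (GV.vv i))
    (hneg : ∀ x : F.Var, NegTrue p x ∨ NegFalse p x)
    (hpos : ∀ o : F.Occ, PosTrue p o ∨ PosFalse p o)
    (himp : ∀ x : F.Var, NegTrue p x → ∀ o : F.Occ, F.litOf o = x → PosFalse p o) :
    (Gphi F).Stable p := by
  have hvv : ∀ i, p (GV.vv i) = some (GV.u i) := fun i => partner_symm hm (hu i)
  have hpb : ∀ o : F.Occ, p (GV.pb o) = some (GV.pa' o) ∨ p (GV.pb o) = some (GV.pa o) :=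
    fun o => (hpos o).imp (fun h => partner_symm hm h.2) (fun h => partner_symm hm h.1)
  have hpb' : ∀ o : F.Occ, p (GV.pb' o) = some (GV.pa o) ∨ p (GV.pb' o) = some (GV.pa' o) :=
    fun o => (hpos o).imp (fun h => partner_symm hm h.1) (fun h => partner_symm hm h.2)
  have hnd : ∀ x : F.Var, p (GV.nd x) = some (GV.nc x) ∨ p (GV.nd x) = some (GV.nc' x) :=
    fun x => (hneg x).imp (fun h => partner_symm hm h.1) (fun h => partner_symm hm h.2)
  have hnd' : ∀ x : F.Var, p (GV.nd' x) = some (GV.nc' x) ∨ p (GV.nd' x) = some (GV.nc x) :=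
    fun x => (hneg x).imp (fun h => partner_symm hm h.2) (fun h => partner_symm hm h.1)
  have hnc : ∀ x : F.Var, p (GV.nc x) = some (GV.nd x) ∨ p (GV.nc x) = some (GV.nd' x) :=
    fun x => (hneg x).imp (fun h => h.1) (fun h => h.1)
  refine ⟨hm, fun u v hb => ?_⟩
  obtain ⟨hadj, hne, h1, h2⟩ := hb
  have hv_mem : v ∈ GV.plist F u := hadj.1
  cases u with
  | s =>
    simp [GV.plist] at hv_mem
    subst hv_mem
    have h2' := (prefOver_some (hu _)).1 h2
    have hlt := pref_idx h2'
    rw [plist_u_zero rfl] at hlt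
    simp [List.idxOf_cons] at hlt
  | t =>
    simp [GV.plist] at hv_mem
    subst hv_mem
    have h2' := (prefOver_some (hvv _)).1 h2
    have hlt := pref_idx h2'
    rw [plist_vv_top rfl] at hlt
    simp [List.idxOf_cons] at hlt
  | u i =>
    have h1' := (prefOver_some (hu i)).1 h1
    by_cases hz : i.val = 0
    · rw [plist_u_zero hz] at hv_mem
      simp at hv_mem
      rcases hv_mem with rfl | rfl
      · exact hne (hu i)
      · have hlt := pref_idx h1'
        rw [plist_u_zero hz] at hlt
        simp [List.idxOf_cons] at hlt
    · by_cases hmid : i.val ≤ F.m + F.n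
      · have hh : i.val - 1 < F.m + F.n := by omega
        rw [plist_u_mid hz hmid hh] at hv_mem
        simp at hv_mem
        rcases hv_mem with ⟨o, -, rfl⟩ | rfl
        · rcases hpb o with hq | hq <;>
          · have h2' := (prefOver_some hq).1 h2
            have hlt := pref_idx h2'
            simp [GV.plist, List.idxOf_cons] at hlt
        · exact hne (hu i)
      · have hh : i.val - (F.m + F.n + 1) < F.n := by have := i.isLt; omega
        rw [plist_u_hi hmid hh] at hv_mem
        simp at hv_mem
        rcases hv_mem with rfl | rfl | rfl
        · exact hne (hu i)
        all_goals
        · have hlt := pref_idx h1'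
          rw [plist_u_hi hmid hh] at hlt
          simp [List.idxOf_cons] at hlt
  | vv i =>
    have h1' := (prefOver_some (hvv i)).1 h1
    by_cases htop : i.val = F.m + 2*F.n
    · rw [plist_vv_top htop] at hv_mem
      simp at hv_mem
      rcases hv_mem with rfl | rfl
      · exact hne (hvv i)
      · have hlt := pref_idx h1'
        rw [plist_vv_top htop] at hlt
        simp [List.idxOf_cons] at hlt
    · by_cases hlo : i.val < F.m + F.n
      · rw [plist_vv_lo hlo] at hv_mem
        simp at hv_mem
        rcases hv_mem with rfl | ⟨o, -, rfl⟩
        · exact hne (hvv i)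
        · have hlt := pref_idx h1'
          rw [plist_vv_lo hlo] at hlt
          simp [List.idxOf_cons] at hlt
      · have hh : i.val - (F.m + F.n) < F.n := by have := i.isLt; omega
        rw [plist_vv_hi htop hlo hh] at hv_mem
        simp at hv_mem
        rcases hv_mem with rfl | rfl | rfl
        rotate_right
        · exact hne (hvv i)
        all_goals
        · rcases hnc _ with hq | hq <;>
          · have h2' := (prefOver_some hq).1 h2
            have hlt := pref_idx h2'
            simp [GV.plist, List.idxOf_cons] at hlt
  | pa o =>
    simp [GV.plist] at hv_mem
    rcases hv_mem with rfl | rfl | rfl | rfl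
    · rcases hpos o with hT | hF
      · have h2' := (prefOver_some (partner_symm hm hT.2)).1 h2
        have hlt := pref_idx h2'
        simp [GV.plist, List.idxOf_cons] at hlt
      · exact hne hF.1
    · rcases hneg (F.litOf o) with hT | hF
      · have hPF := himp _ hT o rfl
        have h1' := (prefOver_some hPF.1).1 h1
        have hlt := pref_idx h1'
        simp [GV.plist, List.idxOf_cons] at hlt
      · have h2' := (prefOver_some (partner_symm hm hF.2)).1 h2
        have hlt := pref_idx h2'
        rw [plist_nd] at hlt
        simp [List.idxOf_cons] at hlt
    · have h2' := (prefOver_some (hvv _)).1 h2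
      have hlt := pref_idx h2'
      rw [plist_vv_lo o.1.1.isLt] at hlt
      simp [List.idxOf_cons] at hlt
    · rcases hpos o with hT | hF
      · exact hne hT.1
      · have h1' := (prefOver_some hF.1).1 h1
        have hlt := pref_idx h1'
        simp [GV.plist, List.idxOf_cons] at hlt
  | pa' o =>
    simp [GV.plist] at hv_mem
    rcases hv_mem with rfl | rfl
    · rcases hpos o with hT | hF
      · rcases hpb' o with hq | hq
        · have h2' := (prefOver_some hq).1 h2
          have hlt := pref_idx h2'
          simp [GV.plist, List.idxOf_cons] at hlt
        · exact hne (partner_symm hm hq)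
      · exact hne hF.2
    · rcases hpos o with hT | hF
      · exact hne hT.2
      · have h1' := (prefOver_some hF.2).1 h1
        have hlt := pref_idx h1'
        simp [GV.plist, List.idxOf_cons] at hlt
  | pb o =>
    simp [GV.plist] at hv_mem
    rcases hv_mem with rfl | rfl | rfl
    · rcases hpos o with hT | hF
      · exact hne (partner_symm hm hT.2)
      · have h2' := (prefOver_some hF.2).1 h2
        have hlt := pref_idx h2'
        simp [GV.plist, List.idxOf_cons] at hlt
    · rcases hpos o with hT | hF
      · have h1' := (prefOver_some (partner_symm hm hT.2)).1 h1
        have hlt := pref_idx h1'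
        simp [GV.plist, List.idxOf_cons] at hlt
      · exact hne (partner_symm hm hF.1)
    · rcases hpb o with hq | hq <;>
      · have h1' := (prefOver_some hq).1 h1
        have hlt := pref_idx h1'
        simp [GV.plist, List.idxOf_cons] at hlt
  | pb' o =>
    simp [GV.plist] at hv_mem
    rcases hv_mem with rfl | rfl
    · rcases hpos o with hT | hF
      · exact hne (partner_symm hm hT.1)
      · have h2' := (prefOver_some hF.1).1 h2
        have hlt := pref_idx h2'
        simp [GV.plist, List.idxOf_cons] at hlt
    · rcases hpos o with hT | hF
      · have h1' := (prefOver_some (partner_symm hm hT.1)).1 h1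
        have hlt := pref_idx h1'
        simp [GV.plist, List.idxOf_cons] at hlt
      · exact hne (partner_symm hm hF.2)
  | nc x =>
    simp [GV.plist] at hv_mem
    rcases hv_mem with rfl | rfl | rfl
    · rcases hneg x with hT | hF
      · exact hne hT.1
      · have h2' := (prefOver_some (partner_symm hm hF.2)).1 h2
        have hlt := pref_idx h2'
        rw [plist_nd] at hlt
        simp [List.idxOf_cons] at hlt
    · rcases hneg x with hT | hF
      · have h1' := (prefOver_some hT.1).1 h1
        have hlt := pref_idx h1'
        simp [GV.plist, List.idxOf_cons] at hlt
      · exact hne hF.1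
    · rcases hneg x with hT | hF
      · have h1' := (prefOver_some hT.1).1 h1
        have hlt := pref_idx h1'
        simp [GV.plist, List.idxOf_cons] at hlt
      · have h1' := (prefOver_some hF.1).1 h1
        have hlt := pref_idx h1'
        simp [GV.plist, List.idxOf_cons] at hlt
  | nc' x =>
    simp [GV.plist] at hv_mem
    rcases hv_mem with rfl | rfl
    · rcases hneg x with hT | hF
      · exact hne hT.2
      · have h2' := (prefOver_some (partner_symm hm hF.1)).1 h2
        have hlt := pref_idx h2'
        simp [GV.plist, List.idxOf_cons] at hlt
    · rcases hneg x with hT | hF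
      · have h1' := (prefOver_some hT.2).1 h1
        have hlt := pref_idx h1'
        simp [GV.plist, List.idxOf_cons] at hlt
      · exact hne hF.2
  | nd x =>
    rw [plist_nd] at hv_mem
    simp [mem_occsOfVar] at hv_mem
    rcases hv_mem with rfl | ⟨o, ho, rfl⟩ | rfl | rfl
    · rcases hneg x with hT | hF
      · have h2' := (prefOver_some hT.2).1 h2
        have hlt := pref_idx h2'
        simp [GV.plist, List.idxOf_cons] at hlt
      · exact hne (partner_symm hm hF.2)
    · rcases hneg x with hT | hF
      · have hPF := himp _ hT o ho
        have h2' := (prefOver_some hPF.1).1 h2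
        have hlt := pref_idx h2'
        simp [GV.plist, List.idxOf_cons] at hlt
      · have h1' := (prefOver_some (partner_symm hm hF.2)).1 h1
        have hlt := pref_idx h1'
        rw [plist_nd] at hlt
        simp [List.idxOf_cons] at hlt
    · have h2' := (prefOver_some (hu _)).1 h2
      have hlt := pref_idx h2'
      have hq1 : ¬ (F.m + F.n + 1 + (F.negIdx x).val ≤ F.m + F.n) := by omega
      have hq2 : F.m + F.n + 1 + (F.negIdx x).val - (F.m + F.n + 1) < F.n :=
        by have := (F.negIdx x).isLt; omega
      rw [plist_u_hi hq1 hq2] at hlt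
      simp [List.idxOf_cons] at hlt
    · rcases hneg x with hT | hF
      · exact hne (partner_symm hm hT.1)
      · have h1' := (prefOver_some (partner_symm hm hF.2)).1 h1
        have hlt := pref_idx h1'
        rw [plist_nd] at hlt
        simp [List.idxOf_cons] at hlt
  | nd' x =>
    simp [GV.plist] at hv_mem
    rcases hv_mem with rfl | rfl
    · rcases hneg x with hT | hF
      · have h2' := (prefOver_some hT.1).1 h2
        have hlt := pref_idx h2'
        simp [GV.plist, List.idxOf_cons] at hlt
      · exact hne (partner_symm hm hF.1)
    · rcases hneg x with hT | hF
      · exact hne (partner_symm hm hT.2)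
      · have h1' := (prefOver_some (partner_symm hm hF.1)).1 h1
        have hlt := pref_idx h1'
        simp [GV.plist, List.idxOf_cons] at hlt

end PopMatch

namespace PopMatch

/-- Structure of the stable matchings of `G_φ`: a stable
matching leaves `s` and `t` unmatched, contains every basic edge `(u_i,v_i)`,
contains no consistency edge, puts every literal gadget in true or false
state, and if the gadget of `¬x` is in true state then all gadgets of `x` are
in false state.  Conversely, every matching satisfying these conditions is
stable. -/
theorem Gphi_stable_characterization (F : Formula)
    (p : GV F → Option (GV F)) :
    ((Gphi F).Stable p →
      ((p GV.s = none ∧ p GV.t = none ∧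
        (∀ i, p (GV.u i) = some (GV.vv i)) ∧
        (∀ o : F.Occ, p (GV.pa o) ≠ some (GV.nd (F.litOf o)))) ∧
       (∀ x : F.Var, NegTrue p x ∨ NegFalse p x) ∧
       (∀ o : F.Occ, PosTrue p o ∨ PosFalse p o) ∧
       (∀ x : F.Var, NegTrue p x →
          ∀ o : F.Occ, F.litOf o = x → PosFalse p o))) ∧
    ((Gphi F).IsMatching p →
      ((p GV.s = none ∧ p GV.t = none ∧
        (∀ i, p (GV.u i) = some (GV.vv i)) ∧
        (∀ o : F.Occ, p (GV.pa o) ≠ some (GV.nd (F.litOf o)))) ∧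
       (∀ x : F.Var, NegTrue p x ∨ NegFalse p x) ∧
       (∀ o : F.Occ, PosTrue p o ∨ PosFalse p o) ∧
       (∀ x : F.Var, NegTrue p x →
          ∀ o : F.Occ, F.litOf o = x → PosFalse p o)) →
      (Gphi F).Stable p) := by
  constructor
  · intro hs
    have hm := hs.1
    refine ⟨⟨s_unmatched hs, t_unmatched hs,
      fun i => partner_symm hm (basic_edges hs i), ?_⟩,
      negStates hs, posStates hs, fun x hT o ho => negImp hs x hT o ho⟩
    intro o hcon
    rcases pa_partner hs o with h | h <;> rw [hcon] at h <;> simp at h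
  · rintro hm ⟨⟨-, -, hu, -⟩, hneg, hpos, himp⟩
    exact converse hm hu hneg hpos himp

end PopMatch
end
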